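/- Suppose the DAG 𝒟 is homogeneous of type I, and let Σ ∈ PD_𝒟, i.e., Σ = (Lᵀ)^{-1} D L^{-1} for some (D, L) ∈ Θ_𝒟. Then for every vertex i, det(Σ_{<i>}) = ∏_{ℓ ∈ pa(i)} Σ_{ℓℓ|<ℓ>}. -/

import Mathlib

open MeasureTheory Matrix Real Finset

noncomputable section

/-- Index type for the free coordinates of a lower triangular matrix `L ∈ ℒ_𝒟`:
a pair of a vertex `i` and a parent `j ∈ pa i`, standing for the entry `L j i`. -/
abbrev Edges {p : ℕ} (pa : Fin p → Finset (Fin p)) : Type := Σ i : Fin p, {j // j ∈ pa i}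

/-- The matrix `L ∈ ℒ_𝒟` built from its free coordinates. -/
def mkL {p : ℕ} (pa : Fin p → Finset (Fin p)) (y : Edges pa → ℝ) :
    Matrix (Fin p) (Fin p) ℝ :=
  Matrix.of fun j i => if j = i then 1 else if h : j ∈ pa i then y ⟨i, j, h⟩ else 0

/-- `A_{<i>}`, the `pa(i) × pa(i)` submatrix of `A`. -/
def sub2 {p : ℕ} (pa : Fin p → Finset (Fin p)) (A : Matrix (Fin p) (Fin p) ℝ) (i : Fin p) :
    Matrix {j // j ∈ pa i} {j // j ∈ pa i} ℝ :=
  A.submatrix (fun j => j.1) (fun j => j.1)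

/-- `A_{<i|}`, the column vector `(A_{ji})_{j ∈ pa(i)}`. -/
def colv {p : ℕ} (pa : Fin p → Finset (Fin p)) (A : Matrix (Fin p) (Fin p) ℝ) (i : Fin p) :
    {j // j ∈ pa i} → ℝ :=
  fun j => A j.1 i

/-- `A_{[i>}`, the row vector `(A_{ij})_{j ∈ pa(i)}`. -/
def rowv {p : ℕ} (pa : Fin p → Finset (Fin p)) (A : Matrix (Fin p) (Fin p) ℝ) (i : Fin p) :
    {j // j ∈ pa i} → ℝ :=
  fun j => A i j.1

/-- `A_{≤i≥}`, the `fa(i) × fa(i)` submatrix of `A`. -/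
def subFam {p : ℕ} (pa : Fin p → Finset (Fin p)) (A : Matrix (Fin p) (Fin p) ℝ) (i : Fin p) :
    Matrix {j // j ∈ insert i (pa i)} {j // j ∈ insert i (pa i)} ℝ :=
  A.submatrix (fun j => j.1) (fun j => j.1)

/-- `A_{ii|<i>} = A_{ii} - A_{[i>} (A_{<i>})⁻¹ A_{<i|}` (equal to `A_{ii}` when `pa(i) = ∅`). -/
def condVar {p : ℕ} (pa : Fin p → Finset (Fin p)) (A : Matrix (Fin p) (Fin p) ℝ) (i : Fin p) :
    ℝ :=
  A i i - rowv pa A i ⬝ᵥ ((sub2 pa A i)⁻¹ *ᵥ colv pa A i)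

/-- The normalizing constant `z_𝒟(U, α)`. -/
def zD {p : ℕ} (pa : Fin p → Finset (Fin p)) (U : Matrix (Fin p) (Fin p) ℝ)
    (α : Fin p → ℝ) : ℝ :=
  ∏ i : Fin p,
    Real.Gamma (α i / 2 - ((pa i).card : ℝ) / 2 - 1) * (2 : ℝ) ^ (α i / 2 - 1) *
        Real.pi ^ (((pa i).card : ℝ) / 2) *
        (sub2 pa U i).det ^ (α i / 2 - ((pa i).card : ℝ) / 2 - 3 / 2) /
      (subFam pa U i).det ^ (α i / 2 - ((pa i).card : ℝ) / 2 - 1)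

/-- The unnormalized DAG-Wishart density on the Cholesky space `Θ_𝒟`. -/
def dagDensity {p : ℕ} (pa : Fin p → Finset (Fin p)) (U : Matrix (Fin p) (Fin p) ℝ)
    (α : Fin p → ℝ) (d : Fin p → ℝ) (L : Matrix (Fin p) (Fin p) ℝ) : ℝ :=
  Real.exp (-(1 / 2) * ((L * Matrix.diagonal (fun i => (d i)⁻¹) * Lᵀ) * U).trace) *
    ∏ i : Fin p, d i ^ (-(α i) / 2)

/-- The Cholesky space `Θ_𝒟` in free coordinates: diagonal coordinates positive. -/
def thetaSet {p : ℕ} (pa : Fin p → Finset (Fin p)) :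
    Set ((Fin p → ℝ) × (Edges pa → ℝ)) :=
  {x | ∀ i, 0 < x.1 i}

/-- The DAG-Wishart distribution `π_{U,α}^{Θ_𝒟}` as a measure on the free coordinates. -/
def dagWishart {p : ℕ} (pa : Fin p → Finset (Fin p)) (U : Matrix (Fin p) (Fin p) ℝ)
    (α : Fin p → ℝ) : Measure ((Fin p → ℝ) × (Edges pa → ℝ)) :=
  (volume.restrict (thetaSet pa)).withDensity
    (fun x => ENNReal.ofReal ((zD pa U α)⁻¹ * dagDensity pa U α x.1 (mkL pa x.2)))


/-- The DAG is transitive: `i ∈ pa(j)` and `j ∈ pa(k)` imply `i ∈ pa(k)`. -/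
def DagTransitive {p : ℕ} (pa : Fin p → Finset (Fin p)) : Prop :=
  ∀ i j k : Fin p, i ∈ pa j → j ∈ pa k → i ∈ pa k

/-- The DAG is perfect: any two distinct parents of a common vertex are adjacent. -/
def DagPerfect {p : ℕ} (pa : Fin p → Finset (Fin p)) : Prop :=
  ∀ k j j' : Fin p, j ∈ pa k → j' ∈ pa k → j ≠ j' → (j ∈ pa j' ∨ j' ∈ pa j)


section AuxStmt14

variable {p : ℕ} {pa : Fin p → Finset (Fin p)} {L : Matrix (Fin p) (Fin p) ℝ}

lemma L_det_one' (hpa : ∀ i : Fin p, ∀ j ∈ pa i, i < j)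
    (hL1 : ∀ i, L i i = 1) (hL0 : ∀ i j : Fin p, j ≠ i → j ∉ pa i → L j i = 0) :
    L.det = 1 := by
  rw [Matrix.det_of_lowerTriangular L]
  · simp [hL1]
  · intro i j h
    simp only [OrderDual.toDual_lt_toDual] at h
    refine hL0 j i (by omega) fun hme => ?_
    exact absurd (hpa j i hme) (by omega)

lemma Minv_sparse' (hpa : ∀ i : Fin p, ∀ j ∈ pa i, i < j)
    (htr : ∀ i j k : Fin p, i ∈ pa j → j ∈ pa k → i ∈ pa k)
    (hL1 : ∀ i, L i i = 1) (hL0 : ∀ i j : Fin p, j ≠ i → j ∉ pa i → L j i = 0)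
    (hdet : IsUnit L.det) :
    ∀ k i : Fin p, k ≠ i → k ∉ pa i → L⁻¹ k i = 0 := by
  have hLM : L * L⁻¹ = 1 := Matrix.mul_nonsing_inv L hdet
  suffices H : ∀ n : ℕ, ∀ k i : Fin p, k.1 < n → k ≠ i → k ∉ pa i → L⁻¹ k i = 0 by
    intro k i; exact H (k.1 + 1) k i (Nat.lt_succ_self _)
  intro n
  induction n with
  | zero => intro k i hk; omega
  | succ n IH =>
  intro k i hkn hne hnp
  have he := congrFun (congrFun hLM k) i
  rw [Matrix.mul_apply, Matrix.one_apply_ne hne] at he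
  have hsplit : ∀ j : Fin p, L k j * L⁻¹ j i = if j = k then L⁻¹ k i else 0 := by
    intro j
    by_cases hjk : j = k
    · simp [hjk, hL1]
    · rw [if_neg hjk]
      by_cases hkj : k ∈ pa j
      · have hjlt : j < k := hpa j k hkj
        have : L⁻¹ j i = 0 := by
          refine IH j i (by omega) (fun hji => ?_) (fun hji => ?_)
          · exact hnp (hji ▸ hkj)
          · exact hnp (htr k j i hkj hji)
        simp [this]
      · rw [hL0 j k (Ne.symm hjk) hkj, zero_mul]
  rw [Finset.sum_congr rfl (fun j _ => hsplit j)] at he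
  simpa using he

lemma Minv_diag' (hpa : ∀ i : Fin p, ∀ j ∈ pa i, i < j)
    (htr : ∀ i j k : Fin p, i ∈ pa j → j ∈ pa k → i ∈ pa k)
    (hL1 : ∀ i, L i i = 1) (hL0 : ∀ i j : Fin p, j ≠ i → j ∉ pa i → L j i = 0)
    (hdet : IsUnit L.det) :
    ∀ k : Fin p, L⁻¹ k k = 1 := by
  have hLM : L * L⁻¹ = 1 := Matrix.mul_nonsing_inv L hdet
  intro k
  have he := congrFun (congrFun hLM k) k
  rw [Matrix.mul_apply, Matrix.one_apply_eq] at he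
  have hsplit : ∀ j : Fin p, L k j * L⁻¹ j k = if j = k then L⁻¹ k k else 0 := by
    intro j
    by_cases hjk : j = k
    · simp [hjk, hL1]
    · rw [if_neg hjk]
      by_cases hkj : k ∈ pa j
      · have hjlt : j < k := hpa j k hkj
        have : L⁻¹ j k = 0 := by
          refine Minv_sparse' hpa htr hL1 hL0 hdet j k hjk (fun hjp => ?_)
          exact absurd (hpa k j hjp) (by omega)
        simp [this]
      · rw [hL0 j k (Ne.symm hjk) hkj, zero_mul]
  rw [Finset.sum_congr rfl (fun j _ => hsplit j)] at he
  simpa using he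

lemma det_sub_closed' (hpa : ∀ i : Fin p, ∀ j ∈ pa i, i < j)
    (d : Fin p → ℝ)
    (hMs : ∀ k i : Fin p, k ≠ i → k ∉ pa i → L⁻¹ k i = 0)
    (hMd : ∀ k : Fin p, L⁻¹ k k = 1)
    (Sig : Matrix (Fin p) (Fin p) ℝ)
    (hSig : Sig = (Lᵀ)⁻¹ * Matrix.diagonal d * L⁻¹)
    (S : Finset (Fin p)) (hS : ∀ s ∈ S, pa s ⊆ S) :
    (Sig.submatrix (fun j : {j // j ∈ S} => j.1) (fun j => j.1)).det = ∏ s ∈ S, d s := by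
  set M := L⁻¹ with hM
  set A : Matrix {j // j ∈ S} {j // j ∈ S} ℝ := M.submatrix (fun j => j.1) (fun j => j.1) with hA
  have key : Sig.submatrix (fun j : {j // j ∈ S} => j.1) (fun j => j.1)
      = Aᵀ * (Matrix.diagonal fun s : {j // j ∈ S} => d s.1) * A := by
    ext s t
    have hsig : ∀ a b : Fin p, Sig a b = ∑ k : Fin p, M k a * (d k * M k b) := by
      intro a b
      rw [hSig, ← Matrix.transpose_nonsing_inv]
      simp [Matrix.mul_apply, Matrix.diagonal, Matrix.transpose_apply, Finset.sum_mul,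
        mul_assoc]
      rfl
    rw [Matrix.submatrix_apply, hsig]
    rw [Matrix.mul_apply]
    have : ∀ k : {j // j ∈ S}, (Aᵀ * Matrix.diagonal fun s : {j // j ∈ S} => d s.1) s k * A k t
        = M k.1 s.1 * (d k.1 * M k.1 t.1) := by
      intro k
      rw [Matrix.mul_apply]
      simp [Matrix.diagonal, hA, Matrix.transpose_apply, Finset.sum_ite_eq]
      ring
    rw [Finset.sum_congr rfl (fun k _ => this k)]
    rw [Finset.sum_coe_sort S (fun k => M k s.1 * (d k * M k t.1))]
    symm
    apply Finset.sum_subset (Finset.subset_univ S)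
    intro k _ hkS
    have : M k s.1 = 0 := by
      refine hMs k s.1 (fun h => hkS (h ▸ s.2)) (fun h => hkS (hS s.1 s.2 h))
    rw [this, zero_mul]
  rw [key, Matrix.det_mul, Matrix.det_mul, Matrix.det_transpose]
  have hdetA : A.det = 1 := by
    rw [Matrix.det_of_lowerTriangular A]
    · simp [hA, hMd]
    · intro s t hlt
      simp only [OrderDual.toDual_lt_toDual] at hlt
      have hlt' : s.1 < t.1 := hlt
      refine hMs s.1 t.1 (by intro h; rw [h] at hlt'; exact lt_irrefl _ hlt')
        (fun h => absurd (hpa t.1 s.1 h) (by omega))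
  rw [hdetA, Matrix.det_diagonal]
  rw [mul_one, one_mul, ← Finset.prod_attach S (fun s => d s)]
  rfl

lemma det_subFam_schur' (pa : Fin p → Finset (Fin p))
    (Sig : Matrix (Fin p) (Fin p) ℝ) (l : Fin p) (hnl : l ∉ pa l)
    (hinv : IsUnit (sub2 pa Sig l).det) :
    (subFam pa Sig l).det = (sub2 pa Sig l).det * condVar pa Sig l := by
  classical
  set A := sub2 pa Sig l with hA
  let e : ({j // j ∈ pa l} ⊕ Unit) ≃ {j // j ∈ insert l (pa l)} :=
    { toFun := fun x => match x with
        | Sum.inl j => ⟨j.1, Finset.mem_insert_of_mem j.2⟩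
        | Sum.inr _ => ⟨l, Finset.mem_insert_self _ _⟩
      invFun := fun x => if h : x.1 ∈ pa l then Sum.inl ⟨x.1, h⟩ else Sum.inr ()
      left_inv := by
        rintro (j | j)
        · simp [j.2]
        · simp [hnl]
      right_inv := by
        rintro ⟨x, hx⟩
        rcases Finset.mem_insert.mp hx with h | h
        · subst h; simp [hnl]
        · simp [h] }
  have hre : (subFam pa Sig l).det = ((subFam pa Sig l).submatrix e e).det :=
    (Matrix.det_submatrix_equiv_self e _).symm
  have hblocks : (subFam pa Sig l).submatrix e e =
      Matrix.fromBlocks A (Matrix.of fun i (_ : Unit) => Sig i.1 l)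
        (Matrix.of fun (_ : Unit) j => Sig l j.1) (Matrix.of fun _ _ => Sig l l) := by
    ext (i | i) (j | j) <;>
      simp [e, subFam, hA, sub2, Matrix.fromBlocks, Matrix.submatrix_apply]
  haveI : Invertible A := A.invertibleOfIsUnitDet hinv
  rw [hre, hblocks, Matrix.det_fromBlocks₁₁]
  congr 1
  rw [Matrix.det_unique]
  have hIO : (⅟A : Matrix _ _ ℝ) = A⁻¹ := Matrix.invOf_eq_nonsing_inv A
  rw [hIO]
  show Sig l l - _ = condVar pa Sig l
  unfold condVar
  congr 1
  rw [Matrix.mul_assoc]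
  simp [Matrix.mul_apply, dotProduct, Matrix.mulVec, rowv, colv, hA]

end AuxStmt14

/-- for a homogeneous DAG of type I and `Σ ∈ PD_𝒟`, for every vertex `i`,
`det(Σ_{<i>}) = ∏_{ℓ ∈ pa(i)} Σ_{ℓℓ|<ℓ>}`. -/
theorem stmt14 {p : ℕ} (hp : 1 ≤ p) (pa : Fin p → Finset (Fin p))
    (hpa : ∀ i : Fin p, ∀ j ∈ pa i, i < j)
    (htr : DagTransitive pa) (hperf : DagPerfect pa)
    (d : Fin p → ℝ) (hd : ∀ i, 0 < d i)
    (L : Matrix (Fin p) (Fin p) ℝ) (hL1 : ∀ i, L i i = 1)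
    (hL0 : ∀ i j : Fin p, j ≠ i → j ∉ pa i → L j i = 0)
    (Sig : Matrix (Fin p) (Fin p) ℝ) (hSig : Sig = (Lᵀ)⁻¹ * Matrix.diagonal d * L⁻¹) :
    ∀ i : Fin p, (sub2 pa Sig i).det = ∏ l ∈ pa i, condVar pa Sig l := by
  classical
  have hnsl : ∀ l : Fin p, l ∉ pa l := fun l hl => absurd (hpa l l hl) (lt_irrefl l)
  have hdetL : IsUnit L.det := by rw [L_det_one' hpa hL1 hL0]; exact isUnit_one
  have hMs := Minv_sparse' hpa htr hL1 hL0 hdetL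
  have hMd := Minv_diag' hpa htr hL1 hL0 hdetL
  have hpaC : ∀ i : Fin p, ∀ s ∈ pa i, pa s ⊆ pa i := fun i s hs j hj => htr j s i hj hs
  have hfaC : ∀ l : Fin p, ∀ s ∈ insert l (pa l), pa s ⊆ insert l (pa l) := by
    intro l s hs j hj
    rcases Finset.mem_insert.mp hs with h | h
    · subst h; exact Finset.mem_insert_of_mem hj
    · exact Finset.mem_insert_of_mem (hpaC l s h hj)
  have hdd := det_sub_closed' hpa d hMs hMd Sig hSig
  have h2 : ∀ l : Fin p, (sub2 pa Sig l).det = ∏ s ∈ pa l, d s :=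
    fun l => hdd (pa l) (hpaC l)
  have hF : ∀ l : Fin p, (subFam pa Sig l).det = d l * ∏ s ∈ pa l, d s := by
    intro l
    have h := hdd (insert l (pa l)) (hfaC l)
    rw [Finset.prod_insert (hnsl l)] at h
    exact h
  have hcv : ∀ l : Fin p, condVar pa Sig l = d l := by
    intro l
    have hpos : (0:ℝ) < ∏ s ∈ pa l, d s := Finset.prod_pos fun s _ => hd s
    have hu : IsUnit (sub2 pa Sig l).det := by
      rw [h2 l]; exact isUnit_iff_ne_zero.mpr (ne_of_gt hpos)
    have hs := det_subFam_schur' pa Sig l (hnsl l) hu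
    rw [hF l, h2 l] at hs
    have := mul_left_cancel₀ (ne_of_gt hpos)
      (hs.symm.trans (mul_comm (d l) (∏ s ∈ pa l, d s)))
    exact this
  intro i
  rw [h2 i]
  exact Finset.prod_congr rfl fun l _ => (hcv l).symm


end
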